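/- The chromatic number of the plane is at least 4: for every function c : ℝ² → Fin 3 there exist points p and q in the plane with dist p q = 1 and c p = c q. -/

import Mathlib

noncomputable def pt (a b : ℝ) : EuclideanSpace ℝ (Fin 2) := WithLp.toLp 2 ![a, b]

lemma pt_dist (a b x y : ℝ) : dist (pt a b) (pt x y) = Real.sqrt ((a-x)^2+(b-y)^2) := by
  rw [EuclideanSpace.dist_eq]
  simp [pt, Fin.sum_univ_two, Real.dist_eq, sq_abs]

lemma sqrt3_sq : (Real.sqrt 3) ^ 2 = 3 := Real.sq_sqrt (by norm_num)

lemma sqrt33_sq : (Real.sqrt 33) ^ 2 = 33 := Real.sq_sqrt (by norm_num)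

/-- If a 3-coloring has no monochromatic unit pair, then any two points at distance √3
get the same color (Moser rhombus argument). -/
lemma sqrt3_same_color (c : EuclideanSpace ℝ (Fin 2) → Fin 3)
    (h : ∀ p q : EuclideanSpace ℝ (Fin 2), dist p q = 1 → c p ≠ c q)
    (a b x y : ℝ) (hxy : dist (pt a b) (pt x y) = Real.sqrt 3) :
    c (pt a b) = c (pt x y) := by
  set s : ℝ := Real.sqrt 3 / 6 with hs_def
  have hs : s ^ 2 = 1 / 12 := by
    rw [hs_def, div_pow, sqrt3_sq]; norm_num
  have hd : (a - x) ^ 2 + (b - y) ^ 2 = 3 := by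
    rw [pt_dist] at hxy
    have h0 : (0:ℝ) ≤ (a-x)^2+(b-y)^2 := by positivity
    have := congrArg (· ^ 2) hxy
    simpa [Real.sq_sqrt h0, sqrt3_sq] using this
  -- the two intersection points of the unit circles around the two points
  set u := pt ((a+x)/2 - (y-b)*s) ((b+y)/2 + (x-a)*s) with hu
  set v := pt ((a+x)/2 + (y-b)*s) ((b+y)/2 - (x-a)*s) with hv
  have d1 : dist (pt a b) u = 1 := by
    rw [hu, pt_dist]
    rw [show (a - ((a+x)/2 - (y-b)*s))^2 + (b - ((b+y)/2 + (x-a)*s))^2 = 1 by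
      linear_combination (1/4 + s^2) * hd + 3 * hs]
    exact Real.sqrt_one
  have d2 : dist (pt a b) v = 1 := by
    rw [hv, pt_dist]
    rw [show (a - ((a+x)/2 + (y-b)*s))^2 + (b - ((b+y)/2 - (x-a)*s))^2 = 1 by
      linear_combination (1/4 + s^2) * hd + 3 * hs]
    exact Real.sqrt_one
  have d3 : dist (pt x y) u = 1 := by
    rw [hu, pt_dist]
    rw [show (x - ((a+x)/2 - (y-b)*s))^2 + (y - ((b+y)/2 + (x-a)*s))^2 = 1 by
      linear_combination (1/4 + s^2) * hd + 3 * hs]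
    exact Real.sqrt_one
  have d4 : dist (pt x y) v = 1 := by
    rw [hv, pt_dist]
    rw [show (x - ((a+x)/2 + (y-b)*s))^2 + (y - ((b+y)/2 - (x-a)*s))^2 = 1 by
      linear_combination (1/4 + s^2) * hd + 3 * hs]
    exact Real.sqrt_one
  have d5 : dist u v = 1 := by
    rw [hu, hv, pt_dist]
    rw [show (((a+x)/2 - (y-b)*s) - ((a+x)/2 + (y-b)*s))^2
        + (((b+y)/2 + (x-a)*s) - ((b+y)/2 - (x-a)*s))^2 = 1 by
      linear_combination 4 * s^2 * hd + 12 * hs]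
    exact Real.sqrt_one
  have h1 := h _ _ d1
  have h2 := h _ _ d2
  have h3 := h _ _ d3
  have h4 := h _ _ d4
  have h5 := h _ _ d5
  omega

/-- The chromatic number of the plane is at least 4: every `3`-coloring of `ℝ²` has two
points at distance exactly `1` receiving the same color. -/
theorem chromatic_number_of_plane_ge_four (c : EuclideanSpace ℝ (Fin 2) → Fin 3) :
    ∃ p q : EuclideanSpace ℝ (Fin 2), dist p q = 1 ∧ c p = c q := by
  by_contra hc
  push_neg at hc
  have h : ∀ p q : EuclideanSpace ℝ (Fin 2), dist p q = 1 → c p ≠ c q := fun p q hpq =>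
    hc p q hpq
  -- P = (0,0), A = (√3, 0), B = (5√3/6, √33/6); |PA| = |PB| = √3, |AB| = 1.
  have hPA : dist (pt 0 0) (pt (Real.sqrt 3) 0) = Real.sqrt 3 := by
    rw [pt_dist]
    rw [show (0 - Real.sqrt 3)^2 + ((0:ℝ) - 0)^2 = 3 by linear_combination sqrt3_sq]

  have hPB : dist (pt 0 0) (pt (5 * Real.sqrt 3 / 6) (Real.sqrt 33 / 6)) = Real.sqrt 3 := by
    rw [pt_dist]
    rw [show (0 - 5 * Real.sqrt 3 / 6)^2 + (0 - Real.sqrt 33 / 6)^2 = 3 by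
      linear_combination (25/36) * sqrt3_sq + (1/36) * sqrt33_sq]

  have hAB : dist (pt (Real.sqrt 3) 0) (pt (5 * Real.sqrt 3 / 6) (Real.sqrt 33 / 6)) = 1 := by
    rw [pt_dist]
    rw [show (Real.sqrt 3 - 5 * Real.sqrt 3 / 6)^2 + ((0:ℝ) - Real.sqrt 33 / 6)^2 = 1 by
      linear_combination (1/36) * sqrt3_sq + (1/36) * sqrt33_sq]
    exact Real.sqrt_one
  have e1 := sqrt3_same_color c h 0 0 (Real.sqrt 3) 0 hPA
  have e2 := sqrt3_same_color c h 0 0 (5 * Real.sqrt 3 / 6) (Real.sqrt 33 / 6) hPB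
  exact h _ _ hAB (e1 ▸ e2)
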